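/- Let α ≥ 0, γ ≥ 1 be real and β ∈ ℂ with γ+α > |β|. Then Σ_{n=1}^∞ (n+1)|A_n| ≤ 2|β|/(γ+α−|β|), where A_n = β^n Γ(γ+α)/Γ((γ+α)(n+1)). -/

import Mathlib

open Complex

noncomputable def rabA (α γ : ℝ) (β : ℂ) (n : ℕ) : ℂ :=
  β ^ n * (Real.Gamma (γ + α) : ℂ) / (Real.Gamma ((γ + α) * (n + 1)) : ℂ)

noncomputable def rab (α γ : ℝ) (β : ℂ) (z : ℂ) : ℂ :=
  z + ∑' k : ℕ, rabA α γ β (k + 1) * z ^ (k + 2)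

noncomputable def rabPartial (α γ : ℝ) (β : ℂ) (m : ℕ) (z : ℂ) : ℂ :=
  z + ∑ k ∈ Finset.range m, rabA α γ β (k + 1) * z ^ (k + 2)

noncomputable def rabD (α γ : ℝ) (β : ℂ) (z : ℂ) : ℂ :=
  1 + ∑' k : ℕ, ((k : ℂ) + 2) * rabA α γ β (k + 1) * z ^ (k + 1)

noncomputable def rabDPartial (α γ : ℝ) (β : ℂ) (m : ℕ) (z : ℂ) : ℂ :=
  1 + ∑ k ∈ Finset.range m, ((k : ℂ) + 2) * rabA α γ β (k + 1) * z ^ (k + 1)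

noncomputable def rabAlex (α γ : ℝ) (β : ℂ) (z : ℂ) : ℂ :=
  z + ∑' k : ℕ, rabA α γ β (k + 1) / ((k : ℂ) + 2) * z ^ (k + 2)

noncomputable def rabAlexPartial (α γ : ℝ) (β : ℂ) (m : ℕ) (z : ℂ) : ℂ :=
  z + ∑ k ∈ Finset.range m, rabA α γ β (k + 1) / ((k : ℂ) + 2) * z ^ (k + 2)


lemma gamma_ratio (y s : ℝ) (hy : 0 < y) (hs : 1 ≤ s) :
    Real.Gamma y * y ^ s ≤ Real.Gamma (y + s) := by
  rcases eq_or_lt_of_le hs with rfl | hs1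
  · rw [Real.rpow_one, Real.Gamma_add_one hy.ne', mul_comm]
  have hsec := Real.convexOn_log_Gamma.secant_mono (a := y) (x := y + 1) (y := y + s)
    (Set.mem_Ioi.2 hy) (Set.mem_Ioi.2 (by linarith)) (Set.mem_Ioi.2 (by linarith))
    (by linarith) (by linarith) (by linarith)
  have hg1 : (Real.log ∘ Real.Gamma) (y + 1) = Real.log y + Real.log (Real.Gamma y) := by
    simp [Real.Gamma_add_one hy.ne', Real.log_mul hy.ne' (Real.Gamma_pos_of_pos hy).ne']
  simp only [Function.comp_apply] at hsec hg1
  rw [hg1] at hsec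
  simp only [add_sub_cancel_left] at hsec
  have h2 : Real.log y * s + Real.log (Real.Gamma y) ≤ Real.log (Real.Gamma (y + s)) := by
    rw [div_le_div_iff₀ (by norm_num) (by linarith)] at hsec
    nlinarith
  calc Real.Gamma y * y ^ s = Real.exp (Real.log y * s + Real.log (Real.Gamma y)) := by
        rw [Real.exp_add, Real.exp_log (Real.Gamma_pos_of_pos hy), Real.exp_mul,
          Real.exp_log hy, mul_comm]
    _ ≤ Real.exp (Real.log (Real.Gamma (y + s))) := Real.exp_le_exp.2 h2
    _ = Real.Gamma (y + s) := Real.exp_log (Real.Gamma_pos_of_pos (by linarith))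

lemma gamma_lb (x : ℝ) (hx : 1 ≤ x) (n : ℕ) :
    Real.Gamma x * (x ^ n * n.factorial) ≤ Real.Gamma (x * (n + 1)) := by
  have hx0 : (0:ℝ) < x := by linarith
  induction n with
  | zero => simp
  | succ n ih =>
    have hb : (1:ℝ) ≤ x * (n + 1) := by
      have hn : (0:ℝ) ≤ (n:ℝ) := Nat.cast_nonneg n
      have : (1:ℝ) ≤ (n:ℝ) + 1 := by linarith
      nlinarith
    have h1 : Real.Gamma (x * (n+1)) * (x * (n+1)) ^ (x:ℝ) ≤ Real.Gamma (x * (n+1) + x) :=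
      gamma_ratio _ x (by linarith) hx
    have h2 : x * (n + 1) ≤ (x * (n+1) : ℝ) ^ (x:ℝ) := by
      calc x * (n+1) = (x * (n+1) : ℝ) ^ (1:ℝ) := (Real.rpow_one _).symm
        _ ≤ _ := Real.rpow_le_rpow_of_exponent_le hb hx
    have heq : x * (n + 1) + x = x * (↑(n+1) + 1) := by push_cast; ring
    rw [← heq]
    calc Real.Gamma x * (x ^ (n+1) * (n+1).factorial)
        = (Real.Gamma x * (x ^ n * n.factorial)) * (x * (n+1)) := by
          push_cast [Nat.factorial_succ]; ring
      _ ≤ Real.Gamma (x * (n+1)) * (x * (n+1)) := by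
          have h3 := mul_le_mul_of_nonneg_right ih (by positivity : (0:ℝ) ≤ x * (n+1))
          push_cast at h3 ⊢; linarith
      _ ≤ Real.Gamma (x * (n+1)) * (x * (n+1) : ℝ) ^ (x:ℝ) := by
          have := Real.Gamma_pos_of_pos (show (0:ℝ) < x * (n+1) by positivity)
          nlinarith
      _ ≤ _ := by push_cast at h1 ⊢; linarith

theorem rabA_deriv_sum_bound (α γ : ℝ) (β : ℂ) (hα : 0 ≤ α) (hγ : 1 ≤ γ)
    (hβ : ‖β‖ < γ + α) :
    (∑' k : ℕ, ((k : ℝ) + 2) * ‖rabA α γ β (k + 1)‖) ≤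
      2 * ‖β‖ / (γ + α - ‖β‖) := by
  set x := γ + α with hxdef
  set b := ‖β‖ with hbdef
  have hx1 : 1 ≤ x := by simp only [hxdef]; linarith
  have hx0 : (0:ℝ) < x := by linarith
  have hb0 : 0 ≤ b := norm_nonneg β
  set q : ℝ := b / x with hqdef
  have hq0 : 0 ≤ q := by positivity
  have hq1 : q < 1 := (div_lt_one hx0).2 hβ
  have hterm : ∀ k : ℕ, ((k:ℝ)+2) * ‖rabA α γ β (k+1)‖ ≤ 2 * q ^ (k+1) := by
    intro k
    have hG2 : (0:ℝ) < Real.Gamma (x * (k+2)) := by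
      apply Real.Gamma_pos_of_pos; positivity
    have hG1 : (0:ℝ) < Real.Gamma x := Real.Gamma_pos_of_pos hx0
    have habs : ‖rabA α γ β (k+1)‖
        = b^(k+1) * Real.Gamma x / Real.Gamma (x * (k+2)) := by
      unfold rabA
      rw [norm_div, norm_mul, norm_pow, Complex.norm_real, Complex.norm_real, Real.norm_eq_abs, Real.norm_eq_abs,
        abs_of_pos hG1, show ((γ+α) * ((k+1:ℕ) + 1) : ℝ) = x * (k+2) by push_cast; ring,
        abs_of_pos hG2]
    rw [habs]
    have hlb : Real.Gamma x * (x ^ (k+1) * (k+1).factorial) ≤ Real.Gamma (x * (k+2)) := by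
      have := gamma_lb x hx1 (k+1)
      push_cast at this ⊢
      convert this using 3
      push_cast; ring
    have hden : (0:ℝ) < Real.Gamma x * (x ^ (k+1) * (k+1).factorial) := by positivity
    have h1 : b^(k+1) * Real.Gamma x / Real.Gamma (x * (k+2))
        ≤ b^(k+1) * Real.Gamma x / (Real.Gamma x * (x ^ (k+1) * (k+1).factorial)) := by
      apply div_le_div_of_nonneg_left (by positivity) hden hlb
    have h2 : b^(k+1) * Real.Gamma x / (Real.Gamma x * (x ^ (k+1) * (k+1).factorial))
        = q ^ (k+1) / (k+1).factorial := by
      rw [hqdef, div_pow]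
      field_simp
    have hfac : ((k:ℝ)+2) ≤ 2 * (k+1).factorial := by
      have h3 : (k+1) ≤ (k+1).factorial := Nat.self_le_factorial _
      have h4 : ((k:ℝ)+1) ≤ ((k+1).factorial : ℝ) := by exact_mod_cast h3
      linarith
    have hfacpos : (0:ℝ) < ((k+1).factorial : ℝ) := by positivity
    calc ((k:ℝ)+2) * (b^(k+1) * Real.Gamma x / Real.Gamma (x * (k+2)))
        ≤ ((k:ℝ)+2) * (q ^ (k+1) / (k+1).factorial) := by
          rw [← h2]; exact mul_le_mul_of_nonneg_left (h1) (by positivity)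
      _ ≤ (2 * (k+1).factorial) * (q ^ (k+1) / (k+1).factorial) := by
          apply mul_le_mul_of_nonneg_right hfac (by positivity)
      _ = 2 * q ^ (k+1) := by field_simp
  have hgsum : Summable (fun k : ℕ => 2 * q ^ (k+1)) := by
    refine ((summable_geometric_of_lt_one hq0 hq1).mul_left (2*q)).congr fun k => ?_
    rw [pow_succ]; ring
  have hfsum : Summable (fun k : ℕ => ((k:ℝ)+2) * ‖rabA α γ β (k+1)‖) := by
    refine Summable.of_nonneg_of_le (fun k => by positivity) hterm hgsum
  calc (∑' k : ℕ, ((k : ℝ) + 2) * ‖rabA α γ β (k + 1)‖)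
      ≤ ∑' k : ℕ, 2 * q ^ (k+1) := Summable.tsum_le_tsum hterm hfsum hgsum
    _ = 2 * q * (1 - q)⁻¹ := by
        rw [tsum_congr (fun k : ℕ => by rw [pow_succ]; ring :
          ∀ k : ℕ, 2 * q ^ (k+1) = (2*q) * q ^ k), tsum_mul_left,
          tsum_geometric_of_lt_one hq0 hq1]
    _ = 2 * b / (x - b) := by
        rw [hqdef]
        have hxb : x - b ≠ 0 := by linarith
        field_simp
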